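/- Let 𝒳^n_↑ be the set of strictly increasing n-tuples of positive reals. The map sending the orbit of (d,v) ∈ Θ^{can} under the (S_n ⋉_φ 𝕋^n)-action to (d_↑, 𝓡(Γ_σ(v))) ∈ 𝒳^n_↑ × ℝ_+^n — where σ is the unique permutation sorting d into increasing order d_↑, Γ_σ(v) permutes v's coordinates accordingly, and 𝓡(w) = (w_1² + w_{n+1}², …, w_n² + w_{2n}²) — is a well-defined bijection between the orbit space Θ^{can}/(S_n ⋉_φ 𝕋^n) and 𝒳^n_↑ × ℝ_+^n. -/

import Mathlib

noncomputable section
open Matrix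

/-- Block rotation: rotate the plane spanned by the `i`-th and `(n+i)`-th coordinates
of `v` by the angle `θ i`. -/
def rotV {n : ℕ} (θ : Fin n → Real.Angle) (v : Fin n ⊕ Fin n → ℝ) :
    Fin n ⊕ Fin n → ℝ :=
  Sum.elim (fun i => (θ i).cos * v (Sum.inl i) - (θ i).sin * v (Sum.inr i))
           (fun i => (θ i).sin * v (Sum.inl i) + (θ i).cos * v (Sum.inr i))

/-- Block permutation `P = diag(P_σ, P_σ)` acting on `v`, `(P_σ x)_i = x_{σ⁻¹ i}`. -/
def permV {n : ℕ} (σ : Equiv.Perm (Fin n)) (v : Fin n ⊕ Fin n → ℝ) :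
    Fin n ⊕ Fin n → ℝ :=
  Sum.elim (fun i => v (Sum.inl (σ⁻¹ i))) (fun i => v (Sum.inr (σ⁻¹ i)))

/-- The map `Γ_{(σ,θ)}(d, v) = (P_σ d, R_θ P v)`. -/
def Gamma {n : ℕ} (σ : Equiv.Perm (Fin n)) (θ : Fin n → Real.Angle)
    (p : (Fin n → ℝ) × (Fin n ⊕ Fin n → ℝ)) :
    (Fin n → ℝ) × (Fin n ⊕ Fin n → ℝ) :=
  (p.1 ∘ ⇑σ⁻¹, rotV θ (permV σ p.2))

/-- The canonical parameter set `Θ^{can}`. -/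
def Canonical {n : ℕ} (p : (Fin n → ℝ) × (Fin n ⊕ Fin n → ℝ)) : Prop :=
  (∀ i, 0 < p.1 i) ∧ Function.Injective p.1 ∧
    ∀ l : Fin n, 0 < p.2 (Sum.inl l) ^ 2 + p.2 (Sum.inr l) ^ 2

/-- Same orbit under the `(S_n ⋉ 𝕋ⁿ)`-action. -/
def SameOrbit {n : ℕ} (p q : (Fin n → ℝ) × (Fin n ⊕ Fin n → ℝ)) : Prop :=
  ∃ (σ : Equiv.Perm (Fin n)) (θ : Fin n → Real.Angle), Gamma σ θ p = q

/-- The map `(d,v) ↦ (d_↑, 𝓡(Γ_σ v))` using the sorting permutation of `d`. -/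
def sortMap {n : ℕ} (p : (Fin n → ℝ) × (Fin n ⊕ Fin n → ℝ)) :
    (Fin n → ℝ) × (Fin n → ℝ) :=
  (p.1 ∘ Tuple.sort p.1, fun l =>
    p.2 (Sum.inl (Tuple.sort p.1 l)) ^ 2 + p.2 (Sum.inr (Tuple.sort p.1 l)) ^ 2)

lemma rot_exists (a b c d : ℝ) (hab : 0 < a^2 + b^2) (h : a^2 + b^2 = c^2 + d^2) :
    ∃ θ : Real.Angle, θ.cos * a - θ.sin * b = c ∧ θ.sin * a + θ.cos * b = d := by
  set z : ℂ := ⟨a, b⟩ with hz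
  set w : ℂ := ⟨c, d⟩ with hw
  have hz0 : z ≠ 0 := by
    intro h0
    rw [Complex.ext_iff] at h0
    simp [hz] at h0
    rw [h0.1, h0.2] at hab; norm_num at hab
  have habs : ‖z‖ = ‖w‖ := by
    have h1 : Complex.normSq z = Complex.normSq w := by
      simp [Complex.normSq_apply, hz, hw]; nlinarith
    rw [Complex.norm_def, Complex.norm_def, h1]
  set u : ℂ := w / z with hu
  have huz : u * z = w := div_mul_cancel₀ w hz0
  have habsu : ‖u‖ = 1 := by
    rw [hu, norm_div, ← habs, div_self (norm_ne_zero_iff.mpr hz0)]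
  have hc : Real.Angle.cos (u.arg : Real.Angle) = u.re := by
    rw [Real.Angle.cos_coe, Complex.cos_arg (by intro h0; rw [h0] at habsu; simp at habsu),
      habsu, div_one]
  have hs : Real.Angle.sin (u.arg : Real.Angle) = u.im := by
    rw [Real.Angle.sin_coe, Complex.sin_arg, habsu, div_one]
  refine ⟨(u.arg : Real.Angle), ?_, ?_⟩
  · rw [hc, hs]
    have := congrArg Complex.re huz
    simpa [Complex.mul_re, hz, hw] using this
  · rw [hc, hs]
    have := congrArg Complex.im huz
    rw [Complex.mul_im] at this; simp [hz, hw] at this; linarith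

lemma rotV_norm {n : ℕ} (θ : Fin n → Real.Angle) (v : Fin n ⊕ Fin n → ℝ) (l : Fin n) :
    rotV θ v (Sum.inl l) ^ 2 + rotV θ v (Sum.inr l) ^ 2
      = v (Sum.inl l) ^ 2 + v (Sum.inr l) ^ 2 := by
  have h := Real.Angle.cos_sq_add_sin_sq (θ l)
  simp only [rotV, Sum.elim_inl, Sum.elim_inr]
  nlinarith [h]

/-- The map sending the orbit of `(d,v) ∈ Θ^{can}` to `(d_↑, 𝓡(Γ_σ v))` is a
well-defined bijection between the orbit space `Θ^{can}/(S_n ⋉ 𝕋ⁿ)` and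
`𝒳ⁿ_↑ × ℝ₊ⁿ` (strictly increasing positive tuples times positive tuples). -/
theorem orbitSpace_equiv_sorted {n : ℕ} :
    (∀ p q : (Fin n → ℝ) × (Fin n ⊕ Fin n → ℝ),
        Canonical p → Canonical q → SameOrbit p q → sortMap p = sortMap q) ∧
    (∀ p q : (Fin n → ℝ) × (Fin n ⊕ Fin n → ℝ),
        Canonical p → Canonical q → sortMap p = sortMap q → SameOrbit p q) ∧
    (∀ p : (Fin n → ℝ) × (Fin n ⊕ Fin n → ℝ), Canonical p →
        StrictMono (sortMap p).1 ∧ (∀ i, 0 < (sortMap p).1 i) ∧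
          ∀ i, 0 < (sortMap p).2 i) ∧
    (∀ t : (Fin n → ℝ) × (Fin n → ℝ), StrictMono t.1 → (∀ i, 0 < t.1 i) →
        (∀ i, 0 < t.2 i) → ∃ p, Canonical p ∧ sortMap p = t) := by
  refine ⟨?_, ?_, ?_, ?_⟩
  · -- well-defined
    rintro p q hp hq ⟨σ, θ, rfl⟩
    have hq1 : (Gamma σ θ p).1 = p.1 ∘ ⇑σ⁻¹ := rfl
    have hsort : p.1 ∘ ⇑(Tuple.sort p.1) = (Gamma σ θ p).1 ∘ ⇑(Tuple.sort (Gamma σ θ p).1) := by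
      rw [hq1]
      exact (Tuple.comp_perm_comp_sort_eq_comp_sort (σ := σ⁻¹) (f := p.1)).symm
    have hpt : ∀ l, Tuple.sort p.1 l = σ⁻¹ (Tuple.sort (Gamma σ θ p).1 l) := by
      intro l
      apply hp.2.1
      have := congrFun hsort l
      simpa [hq1] using this
    refine Prod.ext ?_ ?_
    · exact hsort
    · funext l
      show p.2 _ ^ 2 + p.2 _ ^ 2 = (Gamma σ θ p).2 _ ^ 2 + (Gamma σ θ p).2 _ ^ 2
      have h1 : (Gamma σ θ p).2 = rotV θ (permV σ p.2) := rfl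
      rw [h1, rotV_norm]
      simp only [permV, Sum.elim_inl, Sum.elim_inr]
      rw [hpt l]
  · -- injective
    rintro p q hp hq hst
    have h1 := congrArg Prod.fst hst
    have h2 := congrArg Prod.snd hst
    simp only [sortMap] at h1 h2
    set σ : Equiv.Perm (Fin n) := Tuple.sort q.1 * (Tuple.sort p.1)⁻¹ with hσ
    have hσinv : ∀ i, σ⁻¹ i = Tuple.sort p.1 ((Tuple.sort q.1)⁻¹ i) := by
      intro i; simp [hσ, Equiv.Perm.mul_apply]
    have hfst : ∀ i, p.1 (σ⁻¹ i) = q.1 i := by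
      intro i
      rw [hσinv]
      have := congrFun h1 ((Tuple.sort q.1)⁻¹ i)
      simpa using this
    have hnorm : ∀ i, p.2 (Sum.inl (σ⁻¹ i)) ^ 2 + p.2 (Sum.inr (σ⁻¹ i)) ^ 2
        = q.2 (Sum.inl i) ^ 2 + q.2 (Sum.inr i) ^ 2 := by
      intro i
      have := congrFun h2 ((Tuple.sort q.1)⁻¹ i)
      simpa [hσinv] using this
    have hex : ∀ i, ∃ θ : Real.Angle,
        θ.cos * p.2 (Sum.inl (σ⁻¹ i)) - θ.sin * p.2 (Sum.inr (σ⁻¹ i)) = q.2 (Sum.inl i) ∧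
        θ.sin * p.2 (Sum.inl (σ⁻¹ i)) + θ.cos * p.2 (Sum.inr (σ⁻¹ i)) = q.2 (Sum.inr i) := by
      intro i
      exact rot_exists _ _ _ _ (hp.2.2 (σ⁻¹ i)) (hnorm i)
    choose θ hθ1 hθ2 using hex
    refine ⟨σ, θ, Prod.ext ?_ ?_⟩
    · funext i; exact hfst i
    · funext x
      cases x with
      | inl i => simpa [Gamma, rotV, permV] using hθ1 i
      | inr i => simpa [Gamma, rotV, permV] using hθ2 i
  · -- range properties
    intro p hp
    refine ⟨?_, ?_, ?_⟩
    · have hmono : Monotone (sortMap p).1 := Tuple.monotone_sort p.1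
      exact hmono.strictMono_of_injective (hp.2.1.comp (Tuple.sort p.1).injective)
    · intro i; exact hp.1 _
    · intro i; exact hp.2.2 _
  · -- surjective
    intro t ht1 ht2 ht3
    refine ⟨(t.1, Sum.elim (fun i => Real.sqrt (t.2 i)) (fun _ => 0)), ⟨ht2, ht1.injective, ?_⟩, ?_⟩
    · intro l
      simp only [Sum.elim_inl, Sum.elim_inr]
      rw [Real.sq_sqrt (ht3 l).le]
      simpa using ht3 l
    · have hsort : Tuple.sort t.1 = Equiv.refl _ :=
        Tuple.sort_eq_refl_iff_monotone.2 ht1.monotone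
      refine Prod.ext ?_ ?_
      · show t.1 ∘ ⇑(Tuple.sort t.1) = t.1
        rw [hsort]; rfl
      · funext l
        simp only [sortMap, hsort, Equiv.refl_apply, Sum.elim_inl, Sum.elim_inr]
        rw [Real.sq_sqrt (ht3 l).le]
        ring
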